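/- Let b > 0 and define μ̃(z) = (1/(2b))·ψ₁(1 + z/(2b)) − 1/(z + 2b), where ψ₁ is the trigamma function (the derivative of the digamma function Γ'/Γ). Then for every θ with 0 < θ < π there exists a constant Ψ₀ > 0 such that |μ̃(z)| ≤ b·Ψ₀/|z + 2b|² for all z ≠ 0 in the closed sector {z ∈ ℂ : |arg z| ≤ θ}. -/

import Mathlib

open Complex Filter

/-- The trigamma function `ψ₁(w) = (d/dw) Γ'(w)/Γ(w) = (d²/dw²) log Γ(w)`, given by its
standard (everywhere valid) series representation `ψ₁(w) = Σ_{n≥0} 1/(w+n)²`. -/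
noncomputable def trigamma (w : ℂ) : ℂ := ∑' n : ℕ, 1 / (w + (n : ℂ)) ^ 2

/-- Sector estimate: for `ζ` in the sector `|arg ζ| ≤ θ < π` and `t ≥ 0`,
`|ζ + t| ≥ d (|ζ| + t)` where `d = √(min 1 (1+cos θ) / 2)`. -/
lemma sector_est13 (θ : ℝ) (hθ2 : θ < Real.pi) (ζ : ℂ) (hζ : ζ ≠ 0)
    (harg : |Complex.arg ζ| ≤ θ) (t : ℝ) (ht : 0 ≤ t) :
    Real.sqrt (min 1 (1 + Real.cos θ) / 2) * (‖ζ‖ + t) ≤ ‖ζ + t‖ := by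
  set m : ℝ := min 1 (1 + Real.cos θ) with hm
  have hm1 : m ≤ 1 := min_le_left _ _
  have hm2 : m ≤ 1 + Real.cos θ := min_le_right _ _
  have hmnn : 0 ≤ m / 2 := by
    have : -1 ≤ Real.cos θ := Real.neg_one_le_cos θ
    have : (0:ℝ) ≤ min 1 (1 + Real.cos θ) := le_min (by norm_num) (by linarith)
    simp only [hm]; linarith
  set d : ℝ := Real.sqrt (m / 2) with hd
  have hd2 : d ^ 2 = m / 2 := Real.sq_sqrt hmnn
  have hre : ‖ζ‖ * Real.cos θ ≤ ζ.re := by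
    have h1 : Real.cos θ ≤ Real.cos (Complex.arg ζ) := by
      rw [← Real.cos_abs (Complex.arg ζ)]
      exact Real.cos_le_cos_of_nonneg_of_le_pi (abs_nonneg _) hθ2.le harg
    have h2 : Real.cos (Complex.arg ζ) = ζ.re / ‖ζ‖ := Complex.cos_arg hζ
    have habs : 0 < ‖ζ‖ := norm_pos_iff.mpr hζ
    rw [h2] at h1
    calc ‖ζ‖ * Real.cos θ ≤ ‖ζ‖ * (ζ.re / ‖ζ‖) :=
          mul_le_mul_of_nonneg_left h1 habs.le
      _ = ζ.re := by field_simp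
  have habs2 : ‖ζ + (t:ℂ)‖ ^ 2 = ‖ζ‖ ^ 2 + 2 * t * ζ.re + t ^ 2 := by
    rw [Complex.sq_norm, Complex.sq_norm]
    simp [Complex.normSq_apply, Complex.add_re, Complex.add_im, Complex.ofReal_re,
      Complex.ofReal_im]
    ring
  have hsq : (d * (‖ζ‖ + t)) ^ 2 ≤ ‖ζ + (t:ℂ)‖ ^ 2 := by
    rw [habs2, mul_pow, hd2]
    nlinarith [sq_nonneg (‖ζ‖ - t), sq_nonneg (‖ζ‖ + t),
      Real.cos_le_one θ, norm_nonneg ζ, mul_nonneg ht (norm_nonneg ζ)]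
  have hnn : 0 ≤ d * (‖ζ‖ + t) :=
    mul_nonneg (Real.sqrt_nonneg _) (by positivity)
  exact (pow_le_pow_iff_left₀ hnn (norm_nonneg _) (by norm_num)).mp hsq

lemma base_summable13 : Summable (fun n : ℕ => 1 / ((n:ℝ) + 1) ^ 2) := by
  have h : Summable (fun n : ℕ => 1 / (n:ℝ) ^ 2) := by
    rw [Real.summable_one_div_nat_pow]; norm_num
  have h2 := (summable_nat_add_iff 1).mpr h
  exact h2.congr (fun n => by push_cast; ring_nf)

lemma cube_summable13 (r : ℝ) (hr : 0 ≤ r) :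
    Summable (fun n : ℕ => 1 / (r + n + 1) ^ 3) := by
  refine Summable.of_nonneg_of_le (fun n => by positivity) (fun n => ?_) base_summable13
  apply one_div_le_one_div_of_le (by positivity)
  have h1 : (n:ℝ) + 1 ≤ r + n + 1 := by linarith
  calc ((n:ℝ) + 1) ^ 2 ≤ (r + n + 1) ^ 2 := by
        apply pow_le_pow_left₀ (by positivity) h1
    _ ≤ (r + n + 1) ^ 3 := by
        apply pow_le_pow_right₀ (by nlinarith [Nat.cast_nonneg (α := ℝ) n]) (by norm_num)

lemma cube_tsum_bound13 (r : ℝ) (hr : 0 ≤ r) :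
    ∑' n : ℕ, 1 / (r + n + 1) ^ 3 ≤ 2 / (r + 1) ^ 2 := by
  have hpos : ∀ n : ℕ, 0 < r + n + 1 := fun n => by positivity
  apply Summable.tsum_le_of_sum_range_le (cube_summable13 r hr)
  intro N
  set f : ℕ → ℝ := fun i => 1 / (r + i + 1/2) with hf
  have key : ∀ i : ℕ, 1 / (r + i + 1) ^ 3 ≤ 1/(r+1) * (f i - f (i+1)) := by
    intro i
    have hi : (0:ℝ) ≤ (i:ℝ) := Nat.cast_nonneg i
    have h1 : (0:ℝ) < r + i + 1/2 := by positivity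
    have h3 : f i - f (i+1) = 1/((r + i + 1/2)*(r + i + 1 + 1/2)) := by
      simp only [hf]
      push_cast
      rw [div_sub_div _ _ (ne_of_gt h1) (by linarith)]
      rw [div_eq_div_iff (by nlinarith) (by nlinarith)]
      ring
    rw [h3, one_div_mul_one_div]
    apply one_div_le_one_div_of_le (by positivity)
    have hx : r + 1 ≤ r + i + 1 := by linarith
    nlinarith [mul_le_mul_of_nonneg_right hx (sq_nonneg (r + (i:ℝ) + 1)), hpos i]
  calc ∑ i ∈ Finset.range N, 1 / (r + i + 1) ^ 3
      ≤ ∑ i ∈ Finset.range N, 1/(r+1) * (f i - f (i+1)) :=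
        Finset.sum_le_sum (fun i _ => key i)
    _ = 1/(r+1) * (f 0 - f N) := by rw [← Finset.mul_sum, Finset.sum_range_sub' f N]
    _ ≤ 1/(r+1) * f 0 := by
        have hfN : 0 ≤ f N := by simp only [hf]; positivity
        have h4 : (0:ℝ) ≤ 1/(r+1) := by positivity
        nlinarith
    _ ≤ 2 / (r + 1) ^ 2 := by
        simp only [hf]
        rw [one_div_mul_one_div]
        rw [div_le_div_iff₀ (by push_cast; nlinarith) (by positivity)]
        push_cast
        nlinarith

/-- sectorial bound for the kernel `μ̃`.
For `b > 0` and `μ̃(z) = (1/(2b)) ψ₁(1 + z/(2b)) − 1/(z + 2b)`, for every `θ` with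
`0 < θ < π` there is `Ψ₀ > 0` such that `|μ̃(z)| ≤ b Ψ₀ / |z + 2b|²` for all `z ≠ 0`
in the closed sector `|arg z| ≤ θ`. -/
theorem stmt_13 (b : ℝ) (hb : 0 < b)
    (μt : ℂ → ℂ)
    (hμt : ∀ z : ℂ, μt z = 1 / (2 * (b : ℂ)) * trigamma (1 + z / (2 * (b : ℂ)))
      - 1 / (z + 2 * (b : ℂ))) :
    ∀ θ : ℝ, 0 < θ → θ < Real.pi →
      ∃ Ψ₀ : ℝ, 0 < Ψ₀ ∧ ∀ z : ℂ, z ≠ 0 → |Complex.arg z| ≤ θ →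
        ‖μt z‖ ≤ b * Ψ₀ / ‖z + 2 * (b : ℂ)‖ ^ 2 := by
  intro θ hθ1 hθ2
  set m : ℝ := min 1 (1 + Real.cos θ) with hm
  have hm0 : 0 < m := by
    have h1 : Real.cos Real.pi < Real.cos θ :=
      Real.cos_lt_cos_of_nonneg_of_le_pi hθ1.le le_rfl hθ2
    rw [Real.cos_pi] at h1
    exact lt_min (by norm_num) (by linarith)
  set d : ℝ := Real.sqrt (m / 2) with hd
  have hd0 : 0 < d := Real.sqrt_pos.mpr (by linarith)
  refine ⟨4 / d ^ 3, div_pos (by norm_num) (pow_pos hd0 3), ?_⟩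
  intro z hz hargz
  have hb2 : (2 * (b:ℂ)) ≠ 0 := by
    simp only [ne_eq, mul_eq_zero, not_or]
    exact ⟨two_ne_zero, Complex.ofReal_ne_zero.mpr hb.ne'⟩
  set ζ : ℂ := z / (2 * (b:ℂ)) with hζ
  have hζ0 : ζ ≠ 0 := div_ne_zero hz hb2
  have hargζ : |Complex.arg ζ| ≤ θ := by
    have heq : ζ = (((2*b)⁻¹ : ℝ) : ℂ) * z := by
      rw [hζ, div_eq_inv_mul]
      congr 1
      push_cast
      ring
    rw [heq, Complex.arg_real_mul z (by positivity)]
    exact hargz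
  set r : ℝ := ‖ζ‖ with hr
  have hr0 : 0 < r := norm_pos_iff.mpr hζ0
  set F : ℕ → ℂ := fun n => ζ + ((n:ℂ) + 1) with hF
  have hFlb : ∀ n : ℕ, d * (r + n + 1) ≤ ‖F n‖ := by
    intro n
    have h := sector_est13 θ hθ2 ζ hζ0 hargζ ((n:ℝ)+1) (by positivity)
    have hcast : ((((n:ℝ)+1) : ℝ) : ℂ) = (n:ℂ) + 1 := by push_cast; ring
    rw [hcast] at h
    calc d * (r + n + 1) = d * (r + ((n:ℝ)+1)) := by ring
      _ ≤ _ := h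
  have hFpos : ∀ n : ℕ, 0 < ‖F n‖ := fun n =>
    lt_of_lt_of_le (by positivity) (hFlb n)
  have hF0 : ∀ n : ℕ, F n ≠ 0 := fun n => by
    intro h
    have := hFpos n
    rw [h] at this
    simp at this
  have hFsucc : ∀ n : ℕ, F (n+1) = F n + 1 := by
    intro n
    simp only [hF]
    push_cast
    ring
  have hFd1 : ∀ n : ℕ, d * ((n:ℝ) + 1) ≤ ‖F n‖ := by
    intro n
    refine le_trans ?_ (hFlb n)
    have : (n:ℝ) + 1 ≤ r + n + 1 := by linarith
    nlinarith
  -- summability of the comparison sequence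
  have hgs : Summable (fun n : ℕ => 1 / (d * ((n:ℝ)+1)) ^ 2) := by
    have h := base_summable13.mul_left (1/d^2)
    apply h.congr
    intro n
    rw [one_div_mul_one_div, ← mul_pow]
  -- summability of the three complex series
  have hsum1 : Summable (fun n : ℕ => 1 / (F n) ^ 2) := by
    apply Summable.of_norm_bounded hgs
    intro n
    simp only [norm_div, norm_one, norm_pow]
    apply one_div_le_one_div_of_le (by positivity)
    exact pow_le_pow_left₀ (by positivity) (hFd1 n) 2
  have hsum2 : Summable (fun n : ℕ => 1 / (F n * F (n+1))) := by
    apply Summable.of_norm_bounded hgs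
    intro n
    simp only [norm_div, norm_one, norm_mul]
    apply one_div_le_one_div_of_le (by positivity)
    have h1 := hFd1 n
    have h2 : d * ((n:ℝ) + 1) ≤ ‖F (n+1)‖ := by
      refine le_trans ?_ (hFd1 (n+1))
      push_cast
      nlinarith
    calc (d * ((n:ℝ)+1)) ^ 2 = (d * ((n:ℝ)+1)) * (d * ((n:ℝ)+1)) := sq _
      _ ≤ ‖F n‖ * ‖F (n+1)‖ :=
        mul_le_mul h1 h2 (by positivity) (norm_nonneg _)
  -- bound for the norms of the third series
  have hbound3 : ∀ n : ℕ, ‖1 / ((F n) ^ 2 * F (n+1))‖ ≤ 1/d^3 * (1 / (r + n + 1) ^ 3) := by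
    intro n
    simp only [norm_div, norm_one, norm_mul, norm_pow]
    rw [one_div_mul_one_div]
    apply one_div_le_one_div_of_le (by positivity)
    have h1 := hFlb n
    have h2 : d * (r + n + 1) ≤ ‖F (n+1)‖ := by
      refine le_trans ?_ (hFlb (n+1))
      push_cast
      nlinarith
    have hdn : 0 ≤ d * (r + n + 1) := by positivity
    calc d^3 * (r + (n:ℝ) + 1)^3 = (d * (r+n+1))^2 * (d * (r+n+1)) := by ring
      _ ≤ ‖F n‖ ^ 2 * ‖F (n+1)‖ := by
          apply mul_le_mul (pow_le_pow_left₀ hdn h1 2) h2 hdn (by positivity)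
  have hsumg3 : Summable (fun n : ℕ => 1/d^3 * (1 / (r + (n:ℝ) + 1) ^ 3)) :=
    (cube_summable13 r hr0.le).mul_left _
  have hsum3 : Summable (fun n : ℕ => ‖1 / ((F n) ^ 2 * F (n+1))‖) :=
    Summable.of_nonneg_of_le (fun n => norm_nonneg _) hbound3 hsumg3
  have hsum3' : Summable (fun n : ℕ => 1 / ((F n) ^ 2 * F (n+1))) :=
    Summable.of_norm hsum3
  -- telescoping
  have hGeq : ∀ n : ℕ, 1 / (F n) - 1 / (F (n+1)) = 1 / (F n * F (n+1)) := by
    intro n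
    have h1 := hF0 n
    have h2 := hF0 (n+1)
    rw [hFsucc n] at h2 ⊢
    field_simp
    ring
  have hsumG : Summable (fun n : ℕ => 1 / (F n) - 1 / (F (n+1))) :=
    hsum2.congr (fun n => (hGeq n).symm)
  have htends : Tendsto (fun n : ℕ => 1 / (F n)) atTop (nhds 0) := by
    have hg : Tendsto (fun n : ℕ => 1/d * (1 / ((n:ℝ)+1))) atTop (nhds 0) := by
      have h := tendsto_one_div_add_atTop_nhds_zero_nat.const_mul (1/d)
      simpa using h
    refine squeeze_zero_norm (fun n => ?_) hg
    simp only [norm_div, norm_one]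
    rw [one_div_mul_one_div]
    exact one_div_le_one_div_of_le (by positivity) (hFd1 n)
  have htsumG : ∑' n : ℕ, (1 / (F n) - 1 / (F (n+1))) = 1 / (F 0) := by
    have hpartial : Tendsto (fun N : ℕ => ∑ i ∈ Finset.range N, (1 / (F i) - 1 / (F (i+1))))
        atTop (nhds (1 / (F 0))) := by
      have heq : ∀ N : ℕ, ∑ i ∈ Finset.range N, (1 / (F i) - 1 / (F (i+1)))
          = 1 / (F 0) - 1 / (F N) := fun N => Finset.sum_range_sub' (fun i => 1 / (F i)) N
      simp only [heq]
      have h5 : Tendsto (fun N : ℕ => 1 / (F 0) - 1 / (F N)) atTop (nhds (1 / (F 0) - 0)) :=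
        Tendsto.sub tendsto_const_nhds htends
      simpa using h5
    exact tendsto_nhds_unique hsumG.hasSum.tendsto_sum_nat hpartial
  -- the main identity
  have htrig : trigamma (1 + ζ) = ∑' n : ℕ, 1 / (F n) ^ 2 := by
    apply tsum_congr
    intro n
    simp only [hF]
    ring_nf
  have hmain : trigamma (1 + ζ) - 1 / (F 0) = ∑' n : ℕ, 1 / ((F n) ^ 2 * F (n+1)) := by
    rw [htrig, ← htsumG, ← Summable.tsum_sub hsum1 hsumG]
    apply tsum_congr
    intro n
    rw [hGeq n, hFsucc n]
    have h1 := hF0 n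
    have h2 := hF0 (n+1)
    rw [hFsucc n] at h2
    field_simp
    ring
  -- the norm bound
  have hfinal : ‖trigamma (1 + ζ) - 1 / (F 0)‖ ≤ 1/d^3 * (2 / (r+1)^2) := by
    rw [hmain]
    calc ‖∑' n : ℕ, 1 / ((F n) ^ 2 * F (n+1))‖ ≤ ∑' n : ℕ, ‖1 / ((F n) ^ 2 * F (n+1))‖ :=
          norm_tsum_le_tsum_norm hsum3
      _ ≤ ∑' n : ℕ, 1/d^3 * (1 / (r + (n:ℝ) + 1) ^ 3) := Summable.tsum_le_tsum hbound3 hsum3 hsumg3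
      _ = 1/d^3 * ∑' n : ℕ, 1 / (r + (n:ℝ) + 1) ^ 3 := tsum_mul_left
      _ ≤ 1/d^3 * (2 / (r+1)^2) := by
          apply mul_le_mul_of_nonneg_left (cube_tsum_bound13 r hr0.le) (by positivity)
  -- assembling
  have hzw : z + 2 * (b:ℂ) = (2 * (b:ℂ)) * (F 0) := by
    simp only [hF]
    push_cast
    rw [hζ]
    have hb' : (b:ℂ) ≠ 0 := Complex.ofReal_ne_zero.mpr hb.ne'
    rw [mul_add, mul_div_assoc', mul_div_cancel_left₀ _ hb2]; ring
  have habs2b : ‖2 * (b:ℂ)‖ = 2 * b := by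
    rw [norm_mul]
    simp [abs_of_pos hb]
  have habs_zw : ‖z + 2 * (b:ℂ)‖ = (2*b) * ‖F 0‖ := by
    rw [hzw, norm_mul, habs2b]
  have habsF0 : ‖F 0‖ ≤ r + 1 := by
    simp only [hF]
    push_cast
    calc ‖ζ + (0 + 1)‖ ≤ ‖ζ‖ + ‖(0 + 1 : ℂ)‖ := by
          exact norm_add_le _ _
      _ = r + 1 := by simp [hr]
  have hμ : μt z = 1 / (2 * (b:ℂ)) * (trigamma (1 + ζ) - 1 / (F 0)) := by
    rw [hμt z]
    have h1 : (1:ℂ) / (z + 2 * (b:ℂ)) = 1 / (2 * (b:ℂ)) * (1 / (F 0)) := by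
      rw [hzw]
      exact (one_div_mul_one_div _ _).symm
    rw [h1]
    ring
  have habsμ : ‖μt z‖ = (1/(2*b)) * ‖trigamma (1 + ζ) - 1 / (F 0)‖ := by
    rw [hμ, norm_mul]
    congr 1
    rw [norm_div, habs2b]
    simp
  have hstep : ‖μt z‖ ≤ 1 / (b * d^3 * (r+1)^2) := by
    rw [habsμ]
    calc (1/(2*b)) * ‖trigamma (1 + ζ) - 1 / (F 0)‖
        ≤ (1/(2*b)) * (1/d^3 * (2 / (r+1)^2)) :=
          mul_le_mul_of_nonneg_left hfinal (one_div_pos.mpr (by linarith)).le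
      _ = 1 / (b * d^3 * (r+1)^2) := by field_simp
  have habs_sq : ‖z + 2 * (b:ℂ)‖ ^ 2 ≤ 4 * b^2 * (r+1)^2 := by
    rw [habs_zw, mul_pow]
    have h1 : ‖F 0‖ ^ 2 ≤ (r+1)^2 :=
      pow_le_pow_left₀ (norm_nonneg _) habsF0 2
    nlinarith [sq_nonneg b, hb]
  have habs_pos : 0 < ‖z + 2 * (b:ℂ)‖ ^ 2 := by
    rw [habs_zw]
    exact pow_pos (mul_pos (by linarith) (hFpos 0)) 2
  calc ‖μt z‖ ≤ 1 / (b * d^3 * (r+1)^2) := hstep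
    _ = b * (4 / d^3) / (4 * b^2 * (r+1)^2) := by field_simp
    _ ≤ b * (4 / d^3) / ‖z + 2 * (b:ℂ)‖ ^ 2 :=
        div_le_div_of_nonneg_left
          (mul_nonneg hb.le (div_nonneg (by norm_num) (pow_nonneg hd0.le 3)))
          habs_pos habs_sq
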